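/- Let G be a finite group and H ≤ G. For a G-set Y whose orbits are all isomorphic to G/H, the map Y ↦ Y^H and the map Z ↦ G/H ×_{WH} Z define mutually inverse constructions: for any free WH-set Z, the fixed point set (G/H ×_{WH} Z)^H is in WH-equivariant bijection with Z. -/

import Mathlib

/-- The equivalence relation on `G × Z` defining the twisted product `G/H ×_{WH} Z`
for a set `Z` with an action of the normalizer `N_G(H)` (on which `H` is meant to act
trivially, so this is a `WH`-action): `(gn, z) ∼ (g, n•z)` for `n ∈ N_G(H)`. -/
def twistedSetoidZ (G : Type*) [Group G] (H : Subgroup G) (Z : Type*)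
    [MulAction (Subgroup.normalizer (H : Set G)) Z] : Setoid (G × Z) where
  r p q := ∃ n : (Subgroup.normalizer (H : Set G)), p.1 = q.1 * (n : G) ∧ q.2 = n • p.2
  iseqv := by
    constructor
    · intro p; exact ⟨1, by simp, by simp⟩
    · rintro p q ⟨n, h1, h2⟩
      refine ⟨n⁻¹, by push_cast [h1]; group, by rw [h2]; simp⟩
    · rintro p q s ⟨n, h1, h2⟩ ⟨m, h3, h4⟩
      refine ⟨m * n, by push_cast [h1, h3]; group, by rw [h4, h2, mul_smul]⟩

/-- The `G`-action on the twisted product `G/H ×_{WH} Z`, by left translation on the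
first coordinate. -/
def twistedSmul {G : Type*} [Group G] {H : Subgroup G} {Z : Type*}
    [MulAction (Subgroup.normalizer (H : Set G)) Z] (g : G) :
    Quotient (twistedSetoidZ G H Z) → Quotient (twistedSetoidZ G H Z) :=
  Quotient.map (fun p => (g * p.1, p.2)) (by
    rintro p q ⟨n, h1, h2⟩
    exact ⟨n, by dsimp only; rw [h1, mul_assoc], h2⟩)

/-- For a free `WH`-set `Z` (encoded as an `N_G(H)`-set on which `H` acts trivially
and only elements of `H` can fix a point), the constructions `Y ↦ Y^H` and
`Z ↦ G/H ×_{WH} Z` are mutually inverse: the natural map `z ↦ [1·H, z]` is a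
`WH`-equivariant bijection from `Z` onto the `H`-fixed point set `(G/H ×_{WH} Z)^H`. -/
theorem fixedPoints_of_twisted_product
    (G : Type*) [Group G] [Fintype G] (H : Subgroup G) (Z : Type*)
    [MulAction (Subgroup.normalizer (H : Set G)) Z]
    (htriv : ∀ n : (Subgroup.normalizer (H : Set G)), (n : G) ∈ H → ∀ z : Z, n • z = z)
    (hfree : ∀ (n : (Subgroup.normalizer (H : Set G))) (z : Z), n • z = z → (n : G) ∈ H) :
    ∃ f : Z → {q : Quotient (twistedSetoidZ G H Z) // ∀ h ∈ H, twistedSmul h q = q},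
      (∀ z : Z, (f z : Quotient (twistedSetoidZ G H Z))
          = Quotient.mk (twistedSetoidZ G H Z) ((1 : G), z)) ∧
      Function.Bijective f ∧
      (∀ (n : (Subgroup.normalizer (H : Set G))) (z : Z), (f (n • z) : Quotient (twistedSetoidZ G H Z))
          = Quotient.mk (twistedSetoidZ G H Z) ((n : G), z)) := by
  classical
  have hfix : ∀ z : Z, ∀ h ∈ H, twistedSmul h
      (Quotient.mk (twistedSetoidZ G H Z) ((1 : G), z))
      = Quotient.mk (twistedSetoidZ G H Z) ((1 : G), z) := by
    intro z h hh
    refine Quotient.sound ?_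
    refine ⟨⟨h, H.le_normalizer hh⟩, by simp, ?_⟩
    exact (htriv ⟨h, H.le_normalizer hh⟩ hh z).symm
  refine ⟨fun z => ⟨Quotient.mk (twistedSetoidZ G H Z) ((1 : G), z), hfix z⟩,
    fun z => rfl, ⟨?_, ?_⟩, ?_⟩
  · -- injective
    intro z z' hzz'
    have := Subtype.ext_iff.mp hzz'
    obtain ⟨n, h1, h2⟩ := Quotient.exact this
    have hn1 : (n : G) = 1 := by simpa using h1.symm
    have : n = 1 := Subtype.ext hn1
    rw [this, one_smul] at h2
    exact h2.symm
  · -- surjective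
    rintro ⟨q, hq⟩
    obtain ⟨⟨g, z⟩, rfl⟩ := Quotient.exists_rep q
    -- g normalizes H
    have key : ∀ h ∈ H, ∃ n : Subgroup.normalizer (H : Set G), (n : G) ∈ H ∧ h * g = g * n ∧ z = n • z := by
      intro h hh
      have := hq h hh
      obtain ⟨n, h1, h2⟩ := Quotient.exact this
      exact ⟨n, hfree n z h2.symm, h1, h2⟩
    have hginv : g⁻¹ ∈ Subgroup.normalizer (H : Set G) := by
      apply Subgroup.mem_normalizer_fintype
      intro h hh
      obtain ⟨n, hn, h1, -⟩ := key h hh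
      have h2 : h = g * (n : G) * g⁻¹ := by rw [← h1]; group
      have : g⁻¹ * h * g = (n : G) := by rw [h2]; group
      simpa [this] using hn
    have hg : g ∈ Subgroup.normalizer (H : Set G) := by simpa using inv_mem hginv
    refine ⟨(⟨g, hg⟩ : Subgroup.normalizer (H : Set G)) • z, ?_⟩
    refine Subtype.ext ?_
    refine Quotient.sound ?_
    exact ⟨⟨g, hg⟩⁻¹, by simp, (inv_smul_smul _ z).symm⟩
  · -- equivariance
    intro n z
    refine Quotient.sound ?_
    exact ⟨n⁻¹, by simp, (inv_smul_smul n z).symm⟩
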